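/- Let Ψ be the finite-horizon LTV filter x'(t)=A(t)x(t)+B(t)d(t), e(t)=C(t)x(t)+D(t)d(t) on [0,T] with continuous coefficients, D(t) of full column rank for all t, and let M:[0,T]→S^{n_e} be continuous with M(t) positive definite for all t. Set Q:=CᵀMC, S:=CᵀMD, R:=DᵀMD, let X:[0,T]→S^{n_x} be a continuously differentiable solution of X'+AᵀX+XA+Q−(XB+S)R⁻¹(XB+S)ᵀ=0 with X(T)=0, and let W:[0,T]→ℝ^{n_d×n_d} be continuous with WᵀW=R. Define the square spectral factor U by the output ẽ(t):=W(t)⁻ᵀ(B(t)ᵀX(t)+S(t)ᵀ)x(t)+W(t)d(t) (same state x and input d as Ψ). Then for every continuous input d:[0,T]→ℝ^{n_d} and the trajectory with x(0)=0, the time-domain factorization identity ∫₀ᵀ e(t)ᵀM(t)e(t) dt = ∫₀ᵀ ‖ẽ(t)‖² dt holds (i.e., Ψ~MΨ = U~U as quadratic forms on inputs over [0,T]). -/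

import Mathlib

open Matrix Set

lemma dotH {m n : ℕ} (P : Matrix (Fin m) (Fin n) ℝ) (a : Fin n → ℝ) (w : Fin m → ℝ) :
    (P *ᵥ a) ⬝ᵥ w = a ⬝ᵥ (Pᵀ *ᵥ w) := by
  rw [Matrix.dotProduct_mulVec, Matrix.vecMul_transpose]

lemma dotPQ {m n k : ℕ} (P : Matrix (Fin m) (Fin n) ℝ) (a : Fin n → ℝ)
    (Q : Matrix (Fin m) (Fin k) ℝ) (b : Fin k → ℝ) :
    (P *ᵥ a) ⬝ᵥ (Q *ᵥ b) = a ⬝ᵥ ((Pᵀ * Q) *ᵥ b) := by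
  rw [dotH, Matrix.mulVec_mulVec]

lemma expand2 {m n k : ℕ} (P P' : Matrix (Fin m) (Fin n) ℝ) (Q Q' : Matrix (Fin m) (Fin k) ℝ)
    (a : Fin n → ℝ) (b : Fin k → ℝ) :
    (P *ᵥ a + Q *ᵥ b) ⬝ᵥ (P' *ᵥ a + Q' *ᵥ b)
      = a ⬝ᵥ ((Pᵀ * P') *ᵥ a) + a ⬝ᵥ ((Pᵀ * Q') *ᵥ b)
        + b ⬝ᵥ ((Qᵀ * P') *ᵥ a) + b ⬝ᵥ ((Qᵀ * Q') *ᵥ b) := by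
  simp only [add_dotProduct, dotProduct_add, dotPQ]
  ring

lemma key_pointwise {nx nd ne : ℕ}
    (A : Matrix (Fin nx) (Fin nx) ℝ) (B : Matrix (Fin nx) (Fin nd) ℝ)
    (C : Matrix (Fin ne) (Fin nx) ℝ) (D : Matrix (Fin ne) (Fin nd) ℝ)
    (M : Matrix (Fin ne) (Fin ne) ℝ) (X X' : Matrix (Fin nx) (Fin nx) ℝ)
    (W : Matrix (Fin nd) (Fin nd) ℝ)
    (hMsym : Mᵀ = M) (hXsym : Xᵀ = X)
    (hWdet : IsUnit W.det)
    (hW : Wᵀ * W = Dᵀ * M * D)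
    (hRDE : X' + Aᵀ * X + X * A + Cᵀ * M * C -
        (X * B + Cᵀ * M * D) * (Dᵀ * M * D)⁻¹ * (X * B + Cᵀ * M * D)ᵀ = 0)
    (x : Fin nx → ℝ) (d : Fin nd → ℝ) :
    ((Wᵀ)⁻¹ *ᵥ ((Bᵀ * X + (Cᵀ * M * D)ᵀ) *ᵥ x) + W *ᵥ d) ⬝ᵥ
      ((Wᵀ)⁻¹ *ᵥ ((Bᵀ * X + (Cᵀ * M * D)ᵀ) *ᵥ x) + W *ᵥ d)
    = (C *ᵥ x + D *ᵥ d) ⬝ᵥ (M *ᵥ (C *ᵥ x + D *ᵥ d))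
      + ((A *ᵥ x + B *ᵥ d) ⬝ᵥ (X *ᵥ x) + x ⬝ᵥ (X' *ᵥ x)
        + x ⬝ᵥ (X *ᵥ (A *ᵥ x + B *ᵥ d))) := by
  set K := X * B + Cᵀ * M * D with hK
  have hKT : Bᵀ * X + (Cᵀ * M * D)ᵀ = Kᵀ := by
    rw [hK]; simp [Matrix.transpose_add, Matrix.transpose_mul, hXsym]
  have hWTdet : IsUnit (Wᵀ).det := by rwa [Matrix.det_transpose]
  have hinv1 : W⁻¹ * W = 1 := Matrix.nonsing_inv_mul W hWdet
  have hinv2 : Wᵀ * (Wᵀ)⁻¹ = 1 := Matrix.mul_nonsing_inv _ hWTdet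
  have hE : ((Wᵀ)⁻¹ * Kᵀ)ᵀ = K * W⁻¹ := by
    rw [Matrix.transpose_mul, Matrix.transpose_transpose, Matrix.transpose_nonsing_inv,
      Matrix.transpose_transpose]
  have h1 : ((Wᵀ)⁻¹ * Kᵀ)ᵀ * ((Wᵀ)⁻¹ * Kᵀ) = X' + Aᵀ * X + X * A + Cᵀ * M * C := by
    rw [hE]
    have hmid : W⁻¹ * (Wᵀ)⁻¹ = (Dᵀ * M * D)⁻¹ := by
      rw [← hW, Matrix.mul_inv_rev]
    have : K * W⁻¹ * ((Wᵀ)⁻¹ * Kᵀ) = K * (W⁻¹ * (Wᵀ)⁻¹) * Kᵀ := by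
      simp only [Matrix.mul_assoc]
    rw [this, hmid]
    exact (sub_eq_zero.mp hRDE).symm
  have h2 : ((Wᵀ)⁻¹ * Kᵀ)ᵀ * W = K := by
    rw [hE, Matrix.mul_assoc, hinv1, Matrix.mul_one]
  have h3 : Wᵀ * ((Wᵀ)⁻¹ * Kᵀ) = Kᵀ := by
    rw [← Matrix.mul_assoc, hinv2, Matrix.one_mul]
  rw [hKT, Matrix.mulVec_mulVec, expand2, h1, h2, h3, hW,
    Matrix.mulVec_add M, Matrix.mulVec_mulVec, Matrix.mulVec_mulVec, expand2,
    Matrix.mulVec_add X, Matrix.mulVec_mulVec, Matrix.mulVec_mulVec,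
    add_dotProduct, dotProduct_add, dotPQ, dotPQ]
  simp only [hK, Matrix.transpose_add, Matrix.transpose_mul, Matrix.transpose_transpose,
    hXsym, hMsym, Matrix.add_mulVec, dotProduct_add, Matrix.mul_assoc]
  ring

lemma contOn_mulVec {m n : ℕ} {s : Set ℝ} {P : ℝ → Matrix (Fin m) (Fin n) ℝ}
    {v : ℝ → Fin n → ℝ}
    (hP : ∀ i j, ContinuousOn (fun t => P t i j) s)
    (hv : ∀ j, ContinuousOn (fun t => v t j) s) (i : Fin m) :
    ContinuousOn (fun t => (P t *ᵥ v t) i) s := by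
  simp only [Matrix.mulVec, dotProduct]
  exact continuousOn_finset_sum _ fun j _ => (hP i j).mul (hv j)

lemma contOn_dot {n : ℕ} {s : Set ℝ} {v w : ℝ → Fin n → ℝ}
    (hv : ∀ i, ContinuousOn (fun t => v t i) s)
    (hw : ∀ i, ContinuousOn (fun t => w t i) s) :
    ContinuousOn (fun t => v t ⬝ᵥ w t) s := by
  simp only [dotProduct]
  exact continuousOn_finset_sum _ fun i _ => (hv i).mul (hw i)

/-- the finite-horizon spectral factorization identity `Ψ~MΨ = U~U`
as quadratic forms on inputs: for zero initial state and the Riccati solution `X`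
with `X(T) = 0`, `∫₀ᵀ eᵀMe dt = ∫₀ᵀ ‖ẽ‖² dt` where `e` is the filter output and
`ẽ = W⁻ᵀ(BᵀX + Sᵀ)x + Wd` is the square spectral-factor output. -/
theorem finite_horizon_factorization_identity
    {nx nd ne : ℕ} {T : ℝ} (hT : 0 < T)
    (A : ℝ → Matrix (Fin nx) (Fin nx) ℝ)
    (B : ℝ → Matrix (Fin nx) (Fin nd) ℝ)
    (C : ℝ → Matrix (Fin ne) (Fin nx) ℝ)
    (D : ℝ → Matrix (Fin ne) (Fin nd) ℝ)
    (hA : ∀ i j, ContinuousOn (fun t => A t i j) (Icc 0 T))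
    (hB : ∀ i j, ContinuousOn (fun t => B t i j) (Icc 0 T))
    (hC : ∀ i j, ContinuousOn (fun t => C t i j) (Icc 0 T))
    (hD : ∀ i j, ContinuousOn (fun t => D t i j) (Icc 0 T))
    -- D(t) has full column rank
    (hDrank : ∀ t ∈ Icc (0:ℝ) T, ∀ v : Fin nd → ℝ, D t *ᵥ v = 0 → v = 0)
    (M : ℝ → Matrix (Fin ne) (Fin ne) ℝ)
    (hMcont : ∀ i j, ContinuousOn (fun t => M t i j) (Icc 0 T))
    (hMsym : ∀ t ∈ Icc (0:ℝ) T, (M t)ᵀ = M t)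
    (hMpd : ∀ t ∈ Icc (0:ℝ) T, ∀ v : Fin ne → ℝ, v ≠ 0 → 0 < v ⬝ᵥ (M t *ᵥ v))
    -- continuously differentiable symmetric solution of the factorization RDE
    (X X' : ℝ → Matrix (Fin nx) (Fin nx) ℝ)
    (hXsym : ∀ t ∈ Icc (0:ℝ) T, (X t)ᵀ = X t)
    (hXderiv : ∀ t ∈ Icc (0:ℝ) T, ∀ i j, HasDerivAt (fun s => X s i j) (X' t i j) t)
    (hX'cont : ∀ i j, ContinuousOn (fun t => X' t i j) (Icc 0 T))
    (hXT : X T = 0)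
    (hRDE : ∀ t ∈ Icc (0:ℝ) T,
      X' t + (A t)ᵀ * X t + X t * A t + (C t)ᵀ * M t * C t -
        (X t * B t + (C t)ᵀ * M t * D t) * ((D t)ᵀ * M t * D t)⁻¹ *
          (X t * B t + (C t)ᵀ * M t * D t)ᵀ = 0)
    -- square root factor W of R = DᵀMD
    (W : ℝ → Matrix (Fin nd) (Fin nd) ℝ)
    (hWcont : ∀ i j, ContinuousOn (fun t => W t i j) (Icc 0 T))
    (hW : ∀ t ∈ Icc (0:ℝ) T, (W t)ᵀ * W t = (D t)ᵀ * M t * D t) :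
    ∀ (d : ℝ → Fin nd → ℝ) (x : ℝ → Fin nx → ℝ),
      (∀ i, ContinuousOn (fun t => d t i) (Icc 0 T)) →
      x 0 = 0 →
      (∀ t ∈ Icc (0:ℝ) T, ∀ i,
        HasDerivAt (fun s => x s i) ((A t *ᵥ x t + B t *ᵥ d t) i) t) →
      (∫ t in (0:ℝ)..T,
        (C t *ᵥ x t + D t *ᵥ d t) ⬝ᵥ (M t *ᵥ (C t *ᵥ x t + D t *ᵥ d t))) =
      ∫ t in (0:ℝ)..T,
        (((W t)ᵀ)⁻¹ *ᵥ (((B t)ᵀ * X t + ((C t)ᵀ * M t * D t)ᵀ) *ᵥ x t) + W t *ᵥ d t) ⬝ᵥ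
          (((W t)ᵀ)⁻¹ *ᵥ (((B t)ᵀ * X t + ((C t)ᵀ * M t * D t)ᵀ) *ᵥ x t) + W t *ᵥ d t) := by
  intro d x hd hx0 hx
  have huIcc : uIcc (0:ℝ) T = Icc 0 T := uIcc_of_le hT.le
  -- W(t) has unit determinant
  have hWdet : ∀ t ∈ Icc (0:ℝ) T, IsUnit (W t).det := by
    intro t ht
    have hRdet : ((D t)ᵀ * M t * D t).det ≠ 0 := by
      intro h0
      obtain ⟨v, hv, hv0⟩ := (Matrix.exists_mulVec_eq_zero_iff).mpr h0
      have hpos : 0 < v ⬝ᵥ (((D t)ᵀ * M t * D t) *ᵥ v) := by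
        have hDv : D t *ᵥ v ≠ 0 := fun h => hv (hDrank t ht v h)
        have := hMpd t ht (D t *ᵥ v) hDv
        calc 0 < (D t *ᵥ v) ⬝ᵥ (M t *ᵥ (D t *ᵥ v)) := this
          _ = v ⬝ᵥ (((D t)ᵀ * M t * D t) *ᵥ v) := by
              rw [Matrix.mulVec_mulVec, dotPQ, ← Matrix.mul_assoc]
      rw [hv0] at hpos
      simp at hpos
    have hdet2 : ((W t)ᵀ).det * (W t).det ≠ 0 := by
      rw [← Matrix.det_mul, hW t ht]
      exact hRdet
    exact isUnit_iff_ne_zero.mpr (right_ne_zero_of_mul hdet2)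
  -- continuity of x
  have hxc : ∀ i, ContinuousOn (fun t => x t i) (Icc 0 T) :=
    fun i t ht => ((hx t ht i).continuousAt).continuousWithinAt
  -- the Lyapunov function and its derivative
  have hxdC : ∀ i, ContinuousOn (fun t => (A t *ᵥ x t + B t *ᵥ d t) i) (Icc 0 T) := by
    intro i
    exact ((contOn_mulVec hA hxc i).add (contOn_mulVec hB hd i))
  have hmv : ∀ t ∈ Icc (0:ℝ) T, ∀ i,
      HasDerivAt (fun s => (X s *ᵥ x s) i)
        ((X' t *ᵥ x t + X t *ᵥ (A t *ᵥ x t + B t *ᵥ d t)) i) t := by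
    intro t ht i
    have h := HasDerivAt.sum (u := Finset.univ)
      (A := fun j s => X s i j * x s j)
      (A' := fun j => X' t i j * x t j + X t i j * (A t *ᵥ x t + B t *ᵥ d t) j)
      (fun j _ => (hXderiv t ht i j).mul (hx t ht j))
    simpa [Matrix.mulVec, dotProduct, Finset.sum_add_distrib, Finset.sum_fn] using h
  have hφ : ∀ t ∈ Icc (0:ℝ) T,
      HasDerivAt (fun s => x s ⬝ᵥ (X s *ᵥ x s))
        ((A t *ᵥ x t + B t *ᵥ d t) ⬝ᵥ (X t *ᵥ x t) + x t ⬝ᵥ (X' t *ᵥ x t)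
          + x t ⬝ᵥ (X t *ᵥ (A t *ᵥ x t + B t *ᵥ d t))) t := by
    intro t ht
    have h := HasDerivAt.sum (u := Finset.univ)
      (A := fun i s => x s i * (X s *ᵥ x s) i)
      (A' := fun i => (A t *ᵥ x t + B t *ᵥ d t) i * (X t *ᵥ x t) i
        + x t i * (X' t *ᵥ x t + X t *ᵥ (A t *ᵥ x t + B t *ᵥ d t)) i)
      (fun i _ => (hx t ht i).mul (hmv t ht i))
    have h2 : (fun s => ∑ i, x s i * (X s *ᵥ x s) i) = fun s => x s ⬝ᵥ (X s *ᵥ x s) := by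
      funext s; simp [dotProduct]
    simp only [Finset.sum_fn] at h
    rw [h2] at h
    refine h.congr_deriv ?_
    simp [dotProduct, dotProduct_add, Finset.sum_add_distrib, mul_add]
    ring
  -- pointwise completion-of-squares identity
  have hpt : ∀ t ∈ Icc (0:ℝ) T,
      (((W t)ᵀ)⁻¹ *ᵥ (((B t)ᵀ * X t + ((C t)ᵀ * M t * D t)ᵀ) *ᵥ x t) + W t *ᵥ d t) ⬝ᵥ
        (((W t)ᵀ)⁻¹ *ᵥ (((B t)ᵀ * X t + ((C t)ᵀ * M t * D t)ᵀ) *ᵥ x t) + W t *ᵥ d t)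
      = (C t *ᵥ x t + D t *ᵥ d t) ⬝ᵥ (M t *ᵥ (C t *ᵥ x t + D t *ᵥ d t))
        + ((A t *ᵥ x t + B t *ᵥ d t) ⬝ᵥ (X t *ᵥ x t) + x t ⬝ᵥ (X' t *ᵥ x t)
          + x t ⬝ᵥ (X t *ᵥ (A t *ᵥ x t + B t *ᵥ d t))) := by
    intro t ht
    exact key_pointwise (A t) (B t) (C t) (D t) (M t) (X t) (X' t) (W t)
      (hMsym t ht) (hXsym t ht) (hWdet t ht) (hW t ht) (hRDE t ht) (x t) (d t)
  -- integrability
  have hFc : ContinuousOn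
      (fun t => (C t *ᵥ x t + D t *ᵥ d t) ⬝ᵥ (M t *ᵥ (C t *ᵥ x t + D t *ᵥ d t)))
      (Icc 0 T) := by
    have he : ∀ i, ContinuousOn (fun t => (C t *ᵥ x t + D t *ᵥ d t) i) (Icc 0 T) :=
      fun i => (contOn_mulVec hC hxc i).add (contOn_mulVec hD hd i)
    exact contOn_dot he (contOn_mulVec hMcont he)
  have hGc : ContinuousOn
      (fun t => (A t *ᵥ x t + B t *ᵥ d t) ⬝ᵥ (X t *ᵥ x t) + x t ⬝ᵥ (X' t *ᵥ x t)
        + x t ⬝ᵥ (X t *ᵥ (A t *ᵥ x t + B t *ᵥ d t)))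
      (Icc 0 T) := by
    have hXc : ∀ i j, ContinuousOn (fun t => X t i j) (Icc 0 T) :=
      fun i j s hs => ((hXderiv s hs i j).continuousAt).continuousWithinAt
    exact ((contOn_dot hxdC (contOn_mulVec hXc hxc)).add
      (contOn_dot hxc (contOn_mulVec hX'cont hxc))).add
        (contOn_dot hxc (contOn_mulVec hXc hxdC))
  have hFi : IntervalIntegrable
      (fun t => (C t *ᵥ x t + D t *ᵥ d t) ⬝ᵥ (M t *ᵥ (C t *ᵥ x t + D t *ᵥ d t)))
      MeasureTheory.volume 0 T := (huIcc ▸ hFc).intervalIntegrable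
  have hGi : IntervalIntegrable
      (fun t => (A t *ᵥ x t + B t *ᵥ d t) ⬝ᵥ (X t *ᵥ x t) + x t ⬝ᵥ (X' t *ᵥ x t)
        + x t ⬝ᵥ (X t *ᵥ (A t *ᵥ x t + B t *ᵥ d t)))
      MeasureTheory.volume 0 T := (huIcc ▸ hGc).intervalIntegrable
  -- fundamental theorem of calculus for the Lyapunov term
  have hftc : (∫ t in (0:ℝ)..T,
      ((A t *ᵥ x t + B t *ᵥ d t) ⬝ᵥ (X t *ᵥ x t) + x t ⬝ᵥ (X' t *ᵥ x t)
        + x t ⬝ᵥ (X t *ᵥ (A t *ᵥ x t + B t *ᵥ d t))))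
      = x T ⬝ᵥ (X T *ᵥ x T) - x 0 ⬝ᵥ (X 0 *ᵥ x 0) := by
    exact intervalIntegral.integral_eq_sub_of_hasDerivAt
      (fun t ht => hφ t (huIcc ▸ ht)) hGi
  have hzero : (∫ t in (0:ℝ)..T,
      ((A t *ᵥ x t + B t *ᵥ d t) ⬝ᵥ (X t *ᵥ x t) + x t ⬝ᵥ (X' t *ᵥ x t)
        + x t ⬝ᵥ (X t *ᵥ (A t *ᵥ x t + B t *ᵥ d t)))) = 0 := by
    rw [hftc, hXT, hx0]
    simp
  -- put everything together
  have hcongr : (∫ t in (0:ℝ)..T,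
      (((W t)ᵀ)⁻¹ *ᵥ (((B t)ᵀ * X t + ((C t)ᵀ * M t * D t)ᵀ) *ᵥ x t) + W t *ᵥ d t) ⬝ᵥ
        (((W t)ᵀ)⁻¹ *ᵥ (((B t)ᵀ * X t + ((C t)ᵀ * M t * D t)ᵀ) *ᵥ x t) + W t *ᵥ d t))
      = ∫ t in (0:ℝ)..T,
        ((C t *ᵥ x t + D t *ᵥ d t) ⬝ᵥ (M t *ᵥ (C t *ᵥ x t + D t *ᵥ d t))
          + ((A t *ᵥ x t + B t *ᵥ d t) ⬝ᵥ (X t *ᵥ x t) + x t ⬝ᵥ (X' t *ᵥ x t)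
            + x t ⬝ᵥ (X t *ᵥ (A t *ᵥ x t + B t *ᵥ d t)))) := by
    apply intervalIntegral.integral_congr
    intro t ht
    exact hpt t (huIcc ▸ ht)
  rw [hcongr, intervalIntegral.integral_add hFi hGi, hzero, add_zero]
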